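/- Let L be the lattice of flats of a matroid with twice the usual rank function 2r, κ ∈ 𝒮(L,2r) defined by κ_{FH}(t) := (t−1)^{r_{FH}} Σ_{F ≤ G ≤ H} (−1)^{r_{FG}} χ_{FG}(−1) χ_{GH}(t), and h^{bc}_{FG}(t) := (−t)^{r_{FG}} χ_{FG}(1−t^{-1}). Then κ is an (L,2r)-kernel and h^{bc} is its associated left KLS-function. -/

import Mathlib

open Polynomial

namespace KLS

noncomputable section

variable {P : Type*} [PartialOrder P] [LocallyFiniteOrder P] [DecidableEq P]

/-- Convolution product in the incidence algebra `I(P)`. -/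
def conv (f g : P → P → Polynomial ℤ) : P → P → Polynomial ℤ :=
  fun x z => ∑ y ∈ Finset.Icc x z, f x y * g y z

/-- The identity element `δ` of the incidence algebra. -/
def delta : P → P → Polynomial ℤ := fun x y => if x = y then 1 else 0

/-- Pointwise sum in the incidence algebra. -/
def add (f g : P → P → Polynomial ℤ) : P → P → Polynomial ℤ :=
  fun x y => f x y + g x y

/-- The bar involution `f̄_{xy}(t) = t^{r_{xy}} f_{xy}(t⁻¹)`. -/
def bar (r : P → P → ℕ) (f : P → P → Polynomial ℤ) : P → P → Polynomial ℤ :=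
  fun x y => (f x y).reflect (r x y)

/-- The hat involution `ĥ_{xy}(t) = (-1)^{r_{xy}} h_{xy}(t)`. -/
def hat (r : P → P → ℕ) (f : P → P → Polynomial ℤ) : P → P → Polynomial ℤ :=
  fun x y => (-1 : Polynomial ℤ) ^ (r x y) * f x y

/-- `r` is a weak rank function: positive on strict pairs and additive. -/
def IsWeakRank (r : P → P → ℕ) : Prop :=
  (∀ x y : P, x < y → 0 < r x y) ∧
    ∀ x y z : P, x ≤ y → y ≤ z → r x y + r y z = r x z

/-- Membership in the subring `𝒮(P)`: `deg f_{xy} ≤ r_{xy}`. -/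
def InS (r : P → P → ℕ) (f : P → P → Polynomial ℤ) : Prop :=
  ∀ x y : P, x ≤ y → (f x y).natDegree ≤ r x y

/-- Membership in `𝒮_{1/2}(P)`: `f_{xx} = 1` and `deg f_{xy} < r_{xy}/2`. -/
def InHalf (r : P → P → ℕ) (f : P → P → Polynomial ℤ) : Prop :=
  (∀ x : P, f x x = 1) ∧ ∀ x y : P, x < y → 2 * (f x y).natDegree < r x y

/-- An incidence function vanishes off the order relation. -/
def Supported (f : P → P → Polynomial ℤ) : Prop :=
  ∀ x y : P, ¬ x ≤ y → f x y = 0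

/-- `κ` is a `P`-kernel: `κ ∈ 𝒮(P)`, `κ_{xx} = 1` and `κ⁻¹ = κ̄`. -/
def IsKernel (r : P → P → ℕ) (κ : P → P → Polynomial ℤ) : Prop :=
  InS r κ ∧ (∀ x : P, κ x x = 1) ∧
    (∀ x z : P, x ≤ z → conv κ (bar r κ) x z = delta x z) ∧
    (∀ x z : P, x ≤ z → conv (bar r κ) κ x z = delta x z)

attribute [local instance] Classical.propDecidable

noncomputable local instance flatLFO {α : Type*} [Fintype α] (M : Matroid α) :
    LocallyFiniteOrder {F : Set α // M.IsFlat F} :=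
  Fintype.toLocallyFiniteOrder

/-- The rank of a set in a matroid: the largest cardinality of an independent subset. -/
noncomputable def mrank {α : Type*} (M : Matroid α) (F : Set α) : ℕ :=
  sSup {n : ℕ | ∃ I : Set α, I ⊆ F ∧ M.Indep I ∧ I.ncard = n}

section AuxPoly

lemma nd_pow_le {p : Polynomial ℤ} {c : ℕ} (h : p.natDegree ≤ c) (n : ℕ) :
    (p ^ n).natDegree ≤ n * c :=
  natDegree_pow_le.trans (Nat.mul_le_mul_left n h)

lemma nd_one_sub : ((1 : Polynomial ℤ) - X).natDegree ≤ 1 :=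
  (natDegree_sub_le _ _).trans (by simp)

lemma nd_sq : (((X : Polynomial ℤ)) ^ 2 - X).natDegree ≤ 2 :=
  (natDegree_sub_le _ _).trans (by simp [natDegree_pow])

lemma reflect_one' (N : ℕ) : reflect N (1 : Polynomial ℤ) = X ^ N := by
  rw [← C_1, reflect_C]; simp

lemma reflect_X_one : reflect 1 (X : Polynomial ℤ) = 1 := by
  rw [← pow_one (X : Polynomial ℤ), reflect_monomial, revAt_le (le_refl 1)]
  simp

lemma reflect_one_sub_one : reflect 1 ((1 : Polynomial ℤ) - X) = X - 1 := by
  rw [reflect_sub, reflect_one', pow_one, reflect_X_one]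

lemma reflect_X_pow_self (n : ℕ) : reflect n ((X : Polynomial ℤ) ^ n) = 1 := by
  rw [reflect_monomial, revAt_le (le_refl n)]
  simp

lemma reflect_one_sub_pow (b : ℕ) :
    reflect b (((1 : Polynomial ℤ) - X) ^ b) = (X - 1) ^ b := by
  induction b with
  | zero => simp
  | succ n ih =>
    rw [pow_succ,
      reflect_mul _ _ (by simpa using nd_pow_le nd_one_sub n) (by simpa using nd_one_sub),
      ih, reflect_one_sub_one, ← pow_succ]

lemma reflect_split (c n : ℕ) {p : Polynomial ℤ} (h : p.natDegree ≤ n) :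
    reflect (c + n) p = X ^ c * reflect n p := by
  conv_lhs => rw [← one_mul p]
  rw [reflect_mul _ _ (by simp : (1 : Polynomial ℤ).natDegree ≤ c) h, reflect_one']

lemma reflect_sq_one : reflect 2 (((X : Polynomial ℤ)) ^ 2 - X) = 1 - X := by
  have h1 : ((X : Polynomial ℤ)) ^ 2 - X = X * (X - 1) := by ring
  have h2 : reflect 1 ((X : Polynomial ℤ) - 1) = 1 - X := by
    rw [show ((X : Polynomial ℤ) - 1) = -(1 - X) by ring, reflect_neg, reflect_one_sub_one]
    ring
  have h3 : ((X : Polynomial ℤ) - 1).natDegree ≤ 1 := (natDegree_sub_le _ _).trans (by simp)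
  rw [h1, show (2 : ℕ) = 1 + 1 from rfl,
    reflect_mul _ _ (by simp : (X : Polynomial ℤ).natDegree ≤ 1) h3, reflect_X_one, h2, one_mul]

lemma reflect_sq_pow (b : ℕ) :
    reflect (2 * b) ((((X : Polynomial ℤ)) ^ 2 - X) ^ b) = (1 - X) ^ b := by
  induction b with
  | zero => simp
  | succ n ih =>
    rw [pow_succ, show 2 * (n + 1) = 2 * n + 2 by ring,
      reflect_mul _ _ (by simpa [mul_comm] using nd_pow_le nd_sq n) nd_sq,
      ih, reflect_sq_one, ← pow_succ]

lemma reflect_finset_sum {γ : Type*} (N : ℕ) (s : Finset γ) (f : γ → Polynomial ℤ) :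
    reflect N (∑ i ∈ s, f i) = ∑ i ∈ s, reflect N (f i) := by
  classical
  induction s using Finset.cons_induction with
  | empty => simp [reflect_zero]
  | cons a s ha ih => rw [Finset.sum_cons, Finset.sum_cons, reflect_add, ih]

end AuxPoly

section AuxConv

variable {P : Type*} [PartialOrder P] [LocallyFiniteOrder P] [DecidableEq P]

lemma conv_assoc (f g h : P → P → Polynomial ℤ) (x z : P) :
    conv (conv f g) h x z = conv f (conv g h) x z := by
  unfold conv
  simp only [Finset.sum_mul, Finset.mul_sum]
  rw [Finset.sum_sigma', Finset.sum_sigma']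
  refine Finset.sum_nbij' (fun q => ⟨q.2, q.1⟩) (fun q => ⟨q.2, q.1⟩) ?_ ?_ ?_ ?_ ?_
  · rintro ⟨y, w⟩ hq
    simp only [Finset.mem_sigma, Finset.mem_Icc] at hq ⊢
    exact ⟨⟨hq.2.1, hq.2.2.trans hq.1.2⟩, hq.2.2, hq.1.2⟩
  · rintro ⟨w, y⟩ hq
    simp only [Finset.mem_sigma, Finset.mem_Icc] at hq ⊢
    exact ⟨⟨hq.1.1.trans hq.2.1, hq.2.2⟩, hq.1.1, hq.2.1⟩
  · rintro ⟨y, w⟩ _; rfl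
  · rintro ⟨w, y⟩ _; rfl
  · rintro ⟨y, w⟩ _; exact mul_assoc _ _ _

lemma conv_delta_left (f : P → P → Polynomial ℤ) {x z : P} (h : x ≤ z) :
    conv delta f x z = f x z := by
  unfold conv delta
  simp only [ite_mul, one_mul, zero_mul]
  rw [Finset.sum_ite_eq]
  simp [h]

lemma conv_empty (f g : P → P → Polynomial ℤ) {x z : P} (h : ¬ x ≤ z) :
    conv f g x z = 0 := by
  unfold conv
  rw [Finset.Icc_eq_empty h, Finset.sum_empty]

lemma conv_congr_left (f f' g : P → P → Polynomial ℤ) (x z : P)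
    (h : ∀ y, x ≤ y → y ≤ z → f x y = f' x y) : conv f g x z = conv f' g x z := by
  unfold conv
  refine Finset.sum_congr rfl fun y hy => ?_
  obtain ⟨h1, h2⟩ := Finset.mem_Icc.mp hy
  rw [h y h1 h2]

lemma conv_congr_right (f g g' : P → P → Polynomial ℤ) (x z : P)
    (h : ∀ y, x ≤ y → y ≤ z → g y z = g' y z) : conv f g x z = conv f g' x z := by
  unfold conv
  refine Finset.sum_congr rfl fun y hy => ?_
  obtain ⟨h1, h2⟩ := Finset.mem_Icc.mp hy
  rw [h y h1 h2]

/-- Collapsing lemma: `(f * g) * (h * k) = f * k` when `g * h = δ`. -/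
lemma conv_collapse (f g h k : P → P → Polynomial ℤ)
    (hgh : ∀ x z : P, conv g h x z = delta x z) (x z : P) :
    conv (conv f g) (conv h k) x z = conv f k x z := by
  by_cases hxz : x ≤ z
  · rw [conv_assoc]
    have step : ∀ y, x ≤ y → y ≤ z → conv g (conv h k) y z = k y z := by
      intro y _ hyz
      rw [← conv_assoc]
      have heq : conv (conv g h) k y z = conv delta k y z :=
        conv_congr_left (conv g h) delta k y z (fun w _ _ => hgh y w)
      rw [heq, conv_delta_left _ hyz]
    rw [conv_congr_right f (conv g (conv h k)) k x z step]
  · rw [conv_empty _ _ hxz, conv_empty _ _ hxz]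

end AuxConv

section AuxMatroid

variable {α : Type*} [Fintype α] (M : Matroid α)

lemma mrank_set_nonempty (F : Set α) :
    Set.Nonempty {n : ℕ | ∃ I : Set α, I ⊆ F ∧ M.Indep I ∧ I.ncard = n} :=
  ⟨0, ∅, Set.empty_subset F, M.empty_indep, Set.ncard_empty α⟩

lemma mrank_set_bdd (F : Set α) :
    BddAbove {n : ℕ | ∃ I : Set α, I ⊆ F ∧ M.Indep I ∧ I.ncard = n} := by
  refine ⟨Fintype.card α, ?_⟩
  rintro n ⟨I, -, -, rfl⟩
  have := Set.ncard_le_ncard (Set.subset_univ I) Set.finite_univ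
  simpa [Set.ncard_univ, Nat.card_eq_fintype_card] using this

lemma mrank_mono {F G : Set α} (h : F ⊆ G) : mrank M F ≤ mrank M G := by
  refine csSup_le_csSup (mrank_set_bdd M G) (mrank_set_nonempty M F) ?_
  rintro n ⟨I, hIF, hind, rfl⟩
  exact ⟨I, hIF.trans h, hind, rfl⟩

lemma mrank_strict {F G : Set α} (hF : M.IsFlat F) (hG : M.IsFlat G) (hss : F ⊂ G) :
    mrank M F < mrank M G := by
  obtain ⟨I, hI⟩ := M.exists_isBasis F hF.subset_ground
  have hIF := hI.subset
  have hIind := hI.indep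
  have hub : mrank M F ≤ I.ncard := by
    apply csSup_le (mrank_set_nonempty M F)
    rintro n ⟨J, hJF, hJind, rfl⟩
    by_contra hlt
    push_neg at hlt
    have henc : I.encard < J.encard := by
      rw [← (Set.toFinite I).cast_ncard_eq, ← (Set.toFinite J).cast_ncard_eq]
      exact_mod_cast hlt
    obtain ⟨e, he, hins⟩ := hIind.augment hJind henc
    exact he.2 (hI.mem_of_insert_indep (hJF he.1) hins)
  obtain ⟨e, heG, heF⟩ := Set.exists_of_ssubset hss
  have heE : e ∈ M.E := hG.subset_ground heG
  have hecl : e ∉ M.closure I := by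
    rw [hI.closure_eq_closure, hF.closure]; exact heF
  have hins : M.Indep (insert e I) := by
    rw [hIind.insert_indep_iff]; exact Or.inl ⟨heE, hecl⟩
  have heI : e ∉ I := fun h => heF (hIF h)
  have hmem : I.ncard + 1 ∈ {n : ℕ | ∃ J : Set α, J ⊆ G ∧ M.Indep J ∧ J.ncard = n} :=
    ⟨insert e I, Set.insert_subset heG (hIF.trans hss.subset), hins,
      by rw [Set.ncard_insert_of_notMem heI (Set.toFinite I)]⟩
  have hle : I.ncard + 1 ≤ mrank M G := le_csSup (mrank_set_bdd M G) hmem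
  omega

end AuxMatroid


section MainAbstract

variable {P : Type*} [PartialOrder P] [LocallyFiniteOrder P] [DecidableEq P]

theorem main_abstract (r : P → P → ℕ) (μ χ κ hbc : P → P → Polynomial ℤ)
    (hr : ∀ x y z : P, x ≤ y → y ≤ z → r x y + r y z = r x z)
    (hrpos : ∀ x z : P, x < z → 0 < r x z)
    (hμ₁ : ∀ F H : P, F ≤ H → conv (fun _ _ => (1 : Polynomial ℤ)) μ F H = delta F H)
    (hμ₂ : ∀ F H : P, F ≤ H → conv μ (fun _ _ => (1 : Polynomial ℤ)) F H = delta F H)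
    (hχ : ∀ F G : P, χ F G = conv μ (bar r fun _ _ => (1 : Polynomial ℤ)) F G)
    (hκdef : ∀ F H : P, κ F H = (X - 1 : Polynomial ℤ) ^ (r F H) *
        ∑ G ∈ Finset.Icc F H,
          (-1 : Polynomial ℤ) ^ (r F G) * C ((χ F G).eval (-1)) * χ G H)
    (hbcdef : ∀ F G : P, hbc F G = (-1 : Polynomial ℤ) ^ (r F G) *
        ((χ F G).comp (1 - X)).reflect (r F G)) :
    IsKernel (fun F G => 2 * r F G) κ ∧
    InHalf (fun F G => 2 * r F G) hbc ∧
    (∀ F H : P, F ≤ H →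
      bar (fun F G => 2 * r F G) hbc F H = conv hbc κ F H) := by
  have hr0 : ∀ x : P, r x x = 0 := fun x => by have := hr x x x le_rfl le_rfl; omega
  have hμdiag : ∀ x : P, μ x x = 1 := by
    intro x
    have h := hμ₂ x x le_rfl
    simp only [conv, delta, Finset.Icc_self, Finset.sum_singleton, mul_one, if_pos rfl] at h
    exact h
  -- μ has constant entries
  have hμCex : ∀ x z : P, x ≤ z → ∃ c : ℤ, μ x z = C c := by
    have key : ∀ n : ℕ, ∀ x z : P, x ≤ z → (Finset.Icc x z).card ≤ n →
        ∃ c : ℤ, μ x z = C c := by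
      intro n
      induction n with
      | zero =>
        intro x z hxz hc
        have hz : z ∈ Finset.Icc x z := Finset.mem_Icc.mpr ⟨hxz, le_rfl⟩
        have := Finset.card_pos.mpr ⟨z, hz⟩
        omega
      | succ n ih =>
        intro x z hxz hc
        have h2 := hμ₂ x z hxz
        simp only [conv, delta, mul_one] at h2
        have hz : z ∈ Finset.Icc x z := Finset.mem_Icc.mpr ⟨hxz, le_rfl⟩
        rw [← Finset.add_sum_erase _ _ hz] at h2
        have hrec : ∀ y ∈ (Finset.Icc x z).erase z, μ x y = C ((μ x y).coeff 0) := by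
          intro y hy
          obtain ⟨hyne, hymem⟩ := Finset.mem_erase.mp hy
          obtain ⟨hxy, hyz⟩ := Finset.mem_Icc.mp hymem
          have hzout : z ∉ Finset.Icc x y := fun hmem =>
            hyne (le_antisymm hyz (Finset.mem_Icc.mp hmem).2)
          have hsub : Finset.Icc x y ⊆ Finset.Icc x z := Finset.Icc_subset_Icc_right hyz
          have hne : Finset.Icc x y ≠ Finset.Icc x z := fun he => hzout (he ▸ hz)
          have hlt := Finset.card_lt_card (ssubset_of_subset_of_ne hsub hne)
          obtain ⟨c, hcc⟩ := ih x y hxy (by omega)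
          rw [hcc]; simp
        refine ⟨(if x = z then 1 else 0) - ∑ y ∈ (Finset.Icc x z).erase z, (μ x y).coeff 0, ?_⟩
        have hμxz : μ x z = (if x = z then (1 : Polynomial ℤ) else 0)
            - ∑ y ∈ (Finset.Icc x z).erase z, μ x y := by
          rw [← h2]; ring
        rw [hμxz, Finset.sum_congr rfl hrec]
        simp [apply_ite C, map_sub, map_sum]
    intro x z hxz
    exact key (Finset.Icc x z).card x z hxz le_rfl
  have hμC : ∀ x z : P, x ≤ z → μ x z = C ((μ x z).coeff 0) := by
    intro x z h
    obtain ⟨c, hc⟩ := hμCex x z h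
    rw [hc]; simp
  -- χ explicit formulas
  have hχform : ∀ F H : P, χ F H
      = ∑ G ∈ Finset.Icc F H, C ((μ F G).coeff 0) * X ^ (r G H) := by
    intro F H
    rw [hχ]
    simp only [conv, bar]
    refine Finset.sum_congr rfl fun G hG => ?_
    obtain ⟨h1, h2⟩ := Finset.mem_Icc.mp hG
    rw [reflect_one', ← hμC F G h1]
  have hχglob : χ = conv μ (fun x y : P => (X : Polynomial ℤ) ^ (r x y)) := by
    funext F H
    rw [hχ]
    simp only [conv, bar]
    exact Finset.sum_congr rfl fun G _ => by rw [reflect_one']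
  have hCpow : ∀ k : ℕ, ((-1 : Polynomial ℤ)) ^ k = C ((-1 : ℤ) ^ k) := fun k => by
    rw [map_pow, map_neg, map_one]
  have hXsq : ((X : Polynomial ℤ)) ^ 2 - X = X * (X - 1) := by ring
  have hnegpow : ∀ k : ℕ, ((1 - X : Polynomial ℤ)) ^ k = (-1) ^ k * (X - 1) ^ k := fun k => by
    rw [show ((1 : Polynomial ℤ) - X) = -(X - 1) by ring, neg_pow]
  have hCsplit : ∀ (k : ℕ) (c : ℤ), (C ((-1 : ℤ) ^ k * c) : Polynomial ℤ)
      = (-1) ^ k * C c := fun k c => by rw [map_mul, ← hCpow]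
  -- Form 1 : hbc = conv a1 b1
  have hbcform : ∀ F H : P, hbc F H
      = conv (fun x y => C ((-1 : ℤ) ^ (r x y) * (μ x y).coeff 0) * X ^ (r x y))
          (fun x y => ((1 - X : Polynomial ℤ)) ^ (r x y)) F H := by
    intro F H
    by_cases hFH : F ≤ H
    · rw [hbcdef, hχform F H, Polynomial.sum_comp]
      simp only [conv, mul_comp, C_comp, X_pow_comp]
      rw [reflect_finset_sum, Finset.mul_sum]
      refine Finset.sum_congr rfl fun G hG => ?_
      obtain ⟨h1, h2⟩ := Finset.mem_Icc.mp hG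
      rw [← hr F G H h1 h2, reflect_C_mul,
        reflect_split (r F G) (r G H) (by simpa using nd_pow_le nd_one_sub (r G H)),
        reflect_one_sub_pow, pow_add, hnegpow (r G H), hCsplit]
      ring
    · rw [hbcdef, hχglob, conv_empty _ _ hFH, conv_empty _ _ hFH]
      simp
  have hbcfun : hbc
      = conv (fun x y => C ((-1 : ℤ) ^ (r x y) * (μ x y).coeff 0) * X ^ (r x y))
          (fun x y => ((1 - X : Polynomial ℤ)) ^ (r x y)) :=
    funext fun F => funext fun H => hbcform F H
  -- evaluation identity for the κ-coefficients
  have hEform : ∀ F G : P, (-1 : Polynomial ℤ) ^ (r F G) * C ((χ F G).eval (-1))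
      = conv (fun x y => (C ((-1 : ℤ) ^ (r x y) * (μ x y).coeff 0) : Polynomial ℤ))
          (fun _ _ => (1 : Polynomial ℤ)) F G := by
    intro F G
    by_cases hFG : F ≤ G
    · rw [hχform F G, eval_finset_sum]
      simp only [eval_mul, eval_C, eval_pow, eval_X, conv, mul_one]
      rw [map_sum, Finset.mul_sum]
      refine Finset.sum_congr rfl fun K hK => ?_
      obtain ⟨h1, h2⟩ := Finset.mem_Icc.mp hK
      rw [← hr F K G h1 h2, pow_add, hCpow, hCpow, ← map_mul, ← map_mul]
      congr 1
      have hsq : ((-1 : ℤ)) ^ (r K G) * (-1) ^ (r K G) = 1 := by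
        rw [← pow_add]
        exact Even.neg_one_pow ⟨r K G, rfl⟩
      calc (-1 : ℤ) ^ (r F K) * (-1) ^ (r K G) * ((μ F K).coeff 0 * (-1) ^ (r K G))
          = ((-1 : ℤ) ^ (r F K) * (μ F K).coeff 0) * ((-1) ^ (r K G) * (-1) ^ (r K G)) := by
            ring
        _ = (-1 : ℤ) ^ (r F K) * (μ F K).coeff 0 := by rw [hsq, mul_one]
    · rw [hχglob, conv_empty _ _ hFG, conv_empty _ _ hFG]
      simp
  have hdeltaglob : ∀ x z : P,
      conv (fun _ _ => (1 : Polynomial ℤ)) μ x z = delta x z := by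
    intro x z
    by_cases h : x ≤ z
    · exact hμ₁ x z h
    · rw [conv_empty _ _ h]
      have hne : x ≠ z := fun he => h (he ▸ le_rfl)
      simp [delta, hne]
  -- Form 2 : κ = conv a2 b2
  have hκform : ∀ F H : P, κ F H
      = conv (fun x y => C ((μ x y).coeff 0) * ((1 - X : Polynomial ℤ)) ^ (r x y))
          (fun x y => (((X : Polynomial ℤ)) ^ 2 - X) ^ (r x y)) F H := by
    intro F H
    by_cases hFH : F ≤ H
    · rw [hκdef]
      have step1 : ∑ G ∈ Finset.Icc F H,
          (-1 : Polynomial ℤ) ^ (r F G) * C ((χ F G).eval (-1)) * χ G H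
          = conv (conv (fun x y => (C ((-1 : ℤ) ^ (r x y) * (μ x y).coeff 0) : Polynomial ℤ))
              (fun _ _ => (1 : Polynomial ℤ)))
            (conv μ (fun x y : P => (X : Polynomial ℤ) ^ (r x y))) F H :=
        Finset.sum_congr rfl fun G _ => by rw [hEform, hχglob]
      rw [step1, conv_collapse _ _ _ _ hdeltaglob F H]
      simp only [conv]
      rw [Finset.mul_sum]
      refine Finset.sum_congr rfl fun G hG => ?_
      obtain ⟨h1, h2⟩ := Finset.mem_Icc.mp hG
      rw [← hr F G H h1 h2, pow_add, hnegpow (r F G), hXsq, mul_pow, hCsplit]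
      ring
    · rw [hκdef, Finset.Icc_eq_empty hFH, Finset.sum_empty, mul_zero, conv_empty _ _ hFH]
  have hκfun : κ
      = conv (fun x y => C ((μ x y).coeff 0) * ((1 - X : Polynomial ℤ)) ^ (r x y))
          (fun x y => (((X : Polynomial ℤ)) ^ 2 - X) ^ (r x y)) :=
    funext fun F => funext fun H => hκform F H
  -- bar of hbc
  have hbarhbc : ∀ F H : P, bar (fun x y => 2 * r x y) hbc F H
      = conv (fun x y => C ((-1 : ℤ) ^ (r x y) * (μ x y).coeff 0) * X ^ (r x y))
          (fun x y => (((X : Polynomial ℤ)) ^ 2 - X) ^ (r x y)) F H := by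
    intro F H
    by_cases hFH : F ≤ H
    · show (hbc F H).reflect (2 * r F H) = _
      rw [hbcform F H]
      simp only [conv]
      rw [reflect_finset_sum]
      refine Finset.sum_congr rfl fun G hG => ?_
      obtain ⟨h1, h2⟩ := Finset.mem_Icc.mp hG
      rw [← hr F G H h1 h2]
      have hd1 : ((C ((-1 : ℤ) ^ (r F G) * (μ F G).coeff 0) : Polynomial ℤ)
          * X ^ (r F G)).natDegree ≤ r F G :=
        natDegree_mul_le.trans (by rw [natDegree_C, natDegree_X_pow]; omega)
      have hd2 : (((1 - X : Polynomial ℤ)) ^ (r G H)).natDegree ≤ r G H := by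
        simpa using nd_pow_le nd_one_sub (r G H)
      have hdall : ((C ((-1 : ℤ) ^ (r F G) * (μ F G).coeff 0) : Polynomial ℤ)
          * X ^ (r F G) * ((1 - X : Polynomial ℤ)) ^ (r G H)).natDegree
          ≤ r F G + r G H :=
        natDegree_mul_le.trans (add_le_add hd1 hd2)
      rw [show 2 * (r F G + r G H) = (r F G + r G H) + (r F G + r G H) by ring,
        reflect_split _ _ hdall,
        reflect_mul _ _ hd1 hd2, reflect_C_mul, reflect_X_pow_self, reflect_one_sub_pow,
        pow_add, hXsq, mul_pow]
      ring
    · show (hbc F H).reflect (2 * r F H) = _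
      rw [hbcform F H, conv_empty _ _ hFH, reflect_zero, conv_empty _ _ hFH]
  have hbarhbcfun : bar (fun x y => 2 * r x y) hbc
      = conv (fun x y => C ((-1 : ℤ) ^ (r x y) * (μ x y).coeff 0) * X ^ (r x y))
          (fun x y => (((X : Polynomial ℤ)) ^ 2 - X) ^ (r x y)) :=
    funext fun F => funext fun H => hbarhbc F H
  -- bar of κ
  have hbarκ : ∀ F H : P, bar (fun x y => 2 * r x y) κ F H
      = conv (fun x y => C ((μ x y).coeff 0) * (((X : Polynomial ℤ)) ^ 2 - X) ^ (r x y))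
          (fun x y => ((1 - X : Polynomial ℤ)) ^ (r x y)) F H := by
    intro F H
    by_cases hFH : F ≤ H
    · show (κ F H).reflect (2 * r F H) = _
      rw [hκform F H]
      simp only [conv]
      rw [reflect_finset_sum]
      refine Finset.sum_congr rfl fun G hG => ?_
      obtain ⟨h1, h2⟩ := Finset.mem_Icc.mp hG
      rw [← hr F G H h1 h2]
      have hd1 : ((C ((μ F G).coeff 0) : Polynomial ℤ)
          * ((1 - X : Polynomial ℤ)) ^ (r F G)).natDegree ≤ 2 * r F G := by
        refine natDegree_mul_le.trans ?_
        have := nd_pow_le nd_one_sub (r F G)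
        simp only [natDegree_C, zero_add]
        omega
      have hd2 : ((((X : Polynomial ℤ)) ^ 2 - X) ^ (r G H)).natDegree ≤ 2 * r G H := by
        simpa [mul_comm] using nd_pow_le nd_sq (r G H)
      rw [show 2 * (r F G + r G H) = 2 * r F G + 2 * r G H by ring,
        reflect_mul _ _ hd1 hd2, reflect_C_mul,
        show 2 * r F G = r F G + r F G by ring,
        reflect_split _ _ (by simpa using nd_pow_le nd_one_sub (r F G)),
        reflect_one_sub_pow, reflect_sq_pow]
      try rw [hXsq]
      try rw [mul_pow]
      try ring
    · show (κ F H).reflect (2 * r F H) = _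
      rw [hκform F H, conv_empty _ _ hFH, reflect_zero, conv_empty _ _ hFH]
  have hbarκfun : bar (fun x y => 2 * r x y) κ
      = conv (fun x y => C ((μ x y).coeff 0) * (((X : Polynomial ℤ)) ^ 2 - X) ^ (r x y))
          (fun x y => ((1 - X : Polynomial ℤ)) ^ (r x y)) :=
    funext fun F => funext fun H => hbarκ F H
  -- twisted Möbius inversions
  have hLA : ∀ (p : Polynomial ℤ) (x z : P),
      conv (fun a b => p ^ (r a b))
        (fun a b => C ((μ a b).coeff 0) * p ^ (r a b)) x z = delta x z := by
    intro p x z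
    by_cases hxz : x ≤ z
    · simp only [conv]
      have hstep : ∀ y ∈ Finset.Icc x z, p ^ (r x y) * (C ((μ y z).coeff 0) * p ^ (r y z))
          = p ^ (r x z) * C ((μ y z).coeff 0) := by
        intro y hy
        obtain ⟨h1, h2⟩ := Finset.mem_Icc.mp hy
        rw [show p ^ (r x y) * (C ((μ y z).coeff 0) * p ^ (r y z))
            = p ^ (r x y + r y z) * C ((μ y z).coeff 0) by rw [pow_add]; ring,
          hr x y z h1 h2]
      rw [Finset.sum_congr rfl hstep, ← Finset.mul_sum]
      have hsum : ∑ y ∈ Finset.Icc x z, (C ((μ y z).coeff 0) : Polynomial ℤ)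
          = delta x z := by
        have h := hμ₁ x z hxz
        simp only [conv] at h
        rw [← h]
        refine Finset.sum_congr rfl fun y hy => ?_
        obtain ⟨h1, h2⟩ := Finset.mem_Icc.mp hy
        rw [one_mul]
        exact (hμC y z h2).symm
      rw [hsum]
      by_cases hxz' : x = z
      · subst hxz'; rw [hr0]; simp
      · simp [delta, hxz']
    · rw [conv_empty _ _ hxz]
      have hne : x ≠ z := fun he => hxz (he ▸ le_rfl)
      simp [delta, hne]
  have hLB : ∀ (p : Polynomial ℤ) (x z : P),
      conv (fun a b => C ((μ a b).coeff 0) * p ^ (r a b))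
        (fun a b => p ^ (r a b)) x z = delta x z := by
    intro p x z
    by_cases hxz : x ≤ z
    · simp only [conv]
      have hstep : ∀ y ∈ Finset.Icc x z, C ((μ x y).coeff 0) * p ^ (r x y) * p ^ (r y z)
          = p ^ (r x z) * C ((μ x y).coeff 0) := by
        intro y hy
        obtain ⟨h1, h2⟩ := Finset.mem_Icc.mp hy
        rw [show C ((μ x y).coeff 0) * p ^ (r x y) * p ^ (r y z)
            = p ^ (r x y + r y z) * C ((μ x y).coeff 0) by rw [pow_add]; ring,
          hr x y z h1 h2]
      rw [Finset.sum_congr rfl hstep, ← Finset.mul_sum]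
      have hsum : ∑ y ∈ Finset.Icc x z, (C ((μ x y).coeff 0) : Polynomial ℤ)
          = delta x z := by
        have h := hμ₂ x z hxz
        simp only [conv] at h
        rw [← h]
        refine Finset.sum_congr rfl fun y hy => ?_
        obtain ⟨h1, h2⟩ := Finset.mem_Icc.mp hy
        rw [mul_one]
        exact (hμC x y h1).symm
      rw [hsum]
      by_cases hxz' : x = z
      · subst hxz'; rw [hr0]; simp
      · simp [delta, hxz']
    · rw [conv_empty _ _ hxz]
      have hne : x ≠ z := fun he => hxz (he ▸ le_rfl)
      simp [delta, hne]
  refine ⟨⟨?_, ?_, ?_, ?_⟩, ⟨?_, ?_⟩, ?_⟩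
  · -- InS
    intro x y hxy
    show (κ x y).natDegree ≤ 2 * r x y
    rw [hκform x y]
    simp only [conv]
    refine natDegree_sum_le_of_forall_le _ _ fun G hG => ?_
    obtain ⟨h1, h2⟩ := Finset.mem_Icc.mp hG
    have d1 : ((C ((μ x G).coeff 0) : Polynomial ℤ)
        * ((1 - X : Polynomial ℤ)) ^ (r x G)).natDegree ≤ r x G := by
      refine natDegree_mul_le.trans ?_
      have := nd_pow_le nd_one_sub (r x G)
      simp only [natDegree_C, zero_add]
      omega
    have d2 : ((((X : Polynomial ℤ)) ^ 2 - X) ^ (r G y)).natDegree ≤ 2 * r G y := by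
      simpa [mul_comm] using nd_pow_le nd_sq (r G y)
    have hmul := natDegree_mul_le
      (p := (C ((μ x G).coeff 0) : Polynomial ℤ) * ((1 - X : Polynomial ℤ)) ^ (r x G))
      (q := (((X : Polynomial ℤ)) ^ 2 - X) ^ (r G y))
    have hadd := hr x G y h1 h2
    omega
  · -- κ x x = 1
    intro x
    rw [hκform x x]
    simp only [conv]
    rw [Finset.Icc_self, Finset.sum_singleton, hr0]
    have hone : (μ x x).coeff 0 = 1 := by rw [hμdiag x]; simp
    simp [hone]
  · -- conv κ (bar κ) = delta
    intro x z hxz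
    rw [hbarκfun, hκfun,
      conv_collapse _ _ _ _ (hLA (((X : Polynomial ℤ)) ^ 2 - X)) x z]
    exact hLB ((1 : Polynomial ℤ) - X) x z
  · -- conv (bar κ) κ = delta
    intro x z hxz
    rw [hbarκfun, hκfun,
      conv_collapse _ _ _ _ (hLA ((1 : Polynomial ℤ) - X)) x z]
    exact hLB (((X : Polynomial ℤ)) ^ 2 - X) x z
  · -- hbc x x = 1
    intro x
    rw [hbcform x x]
    simp only [conv]
    rw [Finset.Icc_self, Finset.sum_singleton, hr0]
    have hone : (μ x x).coeff 0 = 1 := by rw [hμdiag x]; simp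
    simp [hone]
  · -- degree bound for hbc
    intro x y hxy
    show 2 * (hbc x y).natDegree < 2 * r x y
    have hle : x ≤ y := le_of_lt hxy
    have hpos := hrpos x y hxy
    suffices hlt : (hbc x y).natDegree < r x y by omega
    have hub : (hbc x y).natDegree ≤ r x y := by
      rw [hbcform x y]
      simp only [conv]
      refine natDegree_sum_le_of_forall_le _ _ fun G hG => ?_
      obtain ⟨h1, h2⟩ := Finset.mem_Icc.mp hG
      have d1 : ((C ((-1 : ℤ) ^ (r x G) * (μ x G).coeff 0) : Polynomial ℤ)
          * X ^ (r x G)).natDegree ≤ r x G :=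
        natDegree_mul_le.trans (by rw [natDegree_C, natDegree_X_pow]; omega)
      have d2 : (((1 - X : Polynomial ℤ)) ^ (r G y)).natDegree ≤ r G y := by
        simpa using nd_pow_le nd_one_sub (r G y)
      have hmul := natDegree_mul_le
        (p := (C ((-1 : ℤ) ^ (r x G) * (μ x G).coeff 0) : Polynomial ℤ) * X ^ (r x G))
        (q := ((1 - X : Polynomial ℤ)) ^ (r G y))
      have hadd := hr x G y h1 h2
      omega
    have hcoeff : (hbc x y).coeff (r x y) = 0 := by
      rw [hbcform x y]
      simp only [conv]
      rw [finset_sum_coeff]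
      have hterm : ∀ G ∈ Finset.Icc x y,
          ((C ((-1 : ℤ) ^ (r x G) * (μ x G).coeff 0) * X ^ (r x G))
            * ((1 - X : Polynomial ℤ)) ^ (r G y)).coeff (r x y)
          = (-1 : ℤ) ^ (r x y) * (μ x G).coeff 0 := by
        intro G hG
        obtain ⟨h1, h2⟩ := Finset.mem_Icc.mp hG
        have hmon : (((X : Polynomial ℤ) - C 1) ^ (r G y)).coeff (r G y) = 1 := by
          have hm := (monic_X_sub_C (1 : ℤ)).pow (r G y)
          have hdeg : (((X : Polynomial ℤ) - C 1) ^ (r G y)).natDegree = r G y := by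
            rw [natDegree_pow, natDegree_X_sub_C, mul_one]
          have := hm.coeff_natDegree
          rwa [hdeg] at this
        rw [← hr x G y h1 h2, mul_assoc, coeff_C_mul,
          add_comm (r x G) (r G y), coeff_X_pow_mul,
          hnegpow (r G y), hCpow (r G y), coeff_C_mul,
          show ((X : Polynomial ℤ) - 1) = X - C 1 by rw [map_one], hmon, pow_add]
        ring
      rw [Finset.sum_congr rfl hterm, ← Finset.mul_sum]
      have hzero : ∑ G ∈ Finset.Icc x y, (μ x G).coeff 0 = 0 := by
        have h := hμ₂ x y hle
        simp only [conv, delta, mul_one] at h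
        rw [if_neg (ne_of_lt hxy)] at h
        have h2 : ∑ G ∈ Finset.Icc x y, μ x G
            = C (∑ G ∈ Finset.Icc x y, (μ x G).coeff 0) := by
          rw [map_sum]
          exact Finset.sum_congr rfl fun G hG => hμC x G (Finset.mem_Icc.mp hG).1
        rw [h2] at h
        exact C_eq_zero.mp h
      rw [hzero, mul_zero]
    rcases lt_or_eq_of_le hub with h | h
    · exact h
    · exfalso
      have hl0 : (hbc x y).leadingCoeff = 0 := by
        rw [Polynomial.leadingCoeff, h]; exact hcoeff
      have h0 : hbc x y = 0 := leadingCoeff_eq_zero.mp hl0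
      rw [h0] at h
      simp only [natDegree_zero] at h
      omega
  · -- main identity
    intro F H hFH
    rw [hbarhbcfun, hbcfun, hκfun,
      conv_collapse _ _ _ _ (hLA ((1 : Polynomial ℤ) - X)) F H]

end MainAbstract


/-- on the lattice of flats `L` of a matroid with doubled rank `2r`,
`κ_{FH}(t) = (t-1)^{r_{FH}} Σ_{F≤G≤H} (-1)^{r_{FG}} χ_{FG}(-1) χ_{GH}(t)` is an
`(L,2r)`-kernel whose left KLS-function is
`h^{bc}_{FG}(t) = (-t)^{r_{FG}} χ_{FG}(1 - t⁻¹)`. -/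
theorem stmt_19 {α : Type*} [Fintype α] (M : Matroid α)
    (rk : {F : Set α // M.IsFlat F} → {F : Set α // M.IsFlat F} → ℕ)
    (hrk : ∀ F G : {F : Set α // M.IsFlat F}, rk F G = mrank M G.1 - mrank M F.1)
    (μ χ κ hbc : {F : Set α // M.IsFlat F} → {F : Set α // M.IsFlat F} → Polynomial ℤ)
    (hμ₁ : ∀ F H : {F : Set α // M.IsFlat F}, F ≤ H →
      conv (fun _ _ => (1 : Polynomial ℤ)) μ F H = delta F H)
    (hμ₂ : ∀ F H : {F : Set α // M.IsFlat F}, F ≤ H →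
      conv μ (fun _ _ => (1 : Polynomial ℤ)) F H = delta F H)
    (hχ : ∀ F G : {F : Set α // M.IsFlat F},
      χ F G = conv μ (bar rk fun _ _ => (1 : Polynomial ℤ)) F G)
    (hκdef : ∀ F H : {F : Set α // M.IsFlat F},
      κ F H = (X - 1 : Polynomial ℤ) ^ (rk F H) *
        ∑ G ∈ Finset.Icc F H,
          (-1 : Polynomial ℤ) ^ (rk F G) * C ((χ F G).eval (-1)) * χ G H)
    (hbcdef : ∀ F G : {F : Set α // M.IsFlat F},
      hbc F G = (-1 : Polynomial ℤ) ^ (rk F G) *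
        ((χ F G).comp (1 - X)).reflect (rk F G)) :
    IsKernel (fun F G => 2 * rk F G) κ ∧
    InHalf (fun F G => 2 * rk F G) hbc ∧
    (∀ F H : {F : Set α // M.IsFlat F}, F ≤ H →
      bar (fun F G => 2 * rk F G) hbc F H = conv hbc κ F H) := by
  refine main_abstract rk μ χ κ hbc ?_ ?_ hμ₁ hμ₂ hχ hκdef hbcdef
  · intro x y z hxy hyz
    have h1 : mrank M x.1 ≤ mrank M y.1 := mrank_mono M (Subtype.coe_le_coe.mpr hxy)
    have h2 : mrank M y.1 ≤ mrank M z.1 := mrank_mono M (Subtype.coe_le_coe.mpr hyz)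
    rw [hrk, hrk, hrk]
    omega
  · intro x z hxz
    have h := mrank_strict M x.2 z.2 (Subtype.coe_lt_coe.mpr hxz)
    rw [hrk]
    omega
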